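/- Let k_1,...,k_r be pairwise distinct elements of {0,...,n} and s_1,...,s_r positive integers with s = s_1 + ... + s_r. Write 1/∏_{j=1}^r (t+k_j)^{s_j} = ∑_{j=1}^r ∑_{i=1}^{s_j} b_{i,j}/(t+k_j)^i for the partial-fraction decomposition. Then d_n^{s−i} · b_{i,j} ∈ ℤ for all i = 1,...,s_j and j = 1,...,r, where d_n = lcm{1,...,n}. -/

import Mathlib

open Polynomial Finset

/-- integrality: `d^(σ+m) * p.coeff m` is an integer for all m -/
def IP (d : ℚ) (σ : ℕ) (p : ℚ[X]) : Prop :=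
  ∀ m, d ^ (σ + m) * p.coeff m ∈ (Int.castRingHom ℚ).range

lemma IP_one (d : ℚ) : IP d 0 1 := by
  intro m
  rcases eq_or_ne m 0 with h|h
  · exact ⟨1, by simp [h]⟩
  · exact ⟨0, by simp [Polynomial.coeff_one, h, Ne.symm h]⟩

lemma IP_mul {d : ℚ} {σ τ : ℕ} {p q : ℚ[X]} (hp : IP d σ p) (hq : IP d τ q) :
    IP d (σ + τ) (p * q) := by
  intro m
  rw [Polynomial.coeff_mul, Finset.mul_sum]
  apply Subring.sum_mem
  rintro ⟨a, c⟩ hx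
  have hac : a + c = m := Finset.HasAntidiagonal.mem_antidiagonal.mp hx
  have : d ^ (σ + τ + m) * (p.coeff a * q.coeff c)
      = (d ^ (σ + a) * p.coeff a) * (d ^ (τ + c) * q.coeff c) := by
    rw [show σ + τ + m = (σ + a) + (τ + c) by omega, pow_add]; ring
  rw [this]
  exact Subring.mul_mem _ (hp a) (hq c)

lemma IP_pow {d : ℚ} {σ : ℕ} {p : ℚ[X]} (hp : IP d σ p) (e : ℕ) :
    IP d (e * σ) (p ^ e) := by
  induction e with
  | zero => simpa using IP_one d
  | succ e ih =>
      have := IP_mul ih hp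
      rw [show e * σ + σ = (e+1) * σ by ring] at this
      simpa [pow_succ] using this

lemma IP_prod {d : ℚ} {ι : Type*} (t : Finset ι) (σ : ι → ℕ) (p : ι → ℚ[X])
    (h : ∀ l ∈ t, IP d (σ l) (p l)) :
    IP d (∑ l ∈ t, σ l) (∏ l ∈ t, p l) := by
  induction t using Finset.cons_induction with
  | empty => simpa using IP_one d
  | cons a t ha ih =>
      rw [Finset.prod_cons, Finset.sum_cons]
      exact IP_mul (h a (Finset.mem_cons_self a t))
        (ih fun l hl => h l (Finset.mem_cons_of_mem hl))

/-- truncated geometric series: inverse of (X + c) mod X^N -/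
noncomputable def G (c : ℚ) (N : ℕ) : ℚ[X] :=
  ∑ m ∈ Finset.range N, Polynomial.monomial m ((-1 : ℚ) ^ m * c⁻¹ ^ (m + 1))

lemma G_coeff (c : ℚ) (N m : ℕ) :
    (G c N).coeff m = if m < N then (-1 : ℚ) ^ m * c⁻¹ ^ (m + 1) else 0 := by
  rw [G, Polynomial.finset_sum_coeff]
  simp only [Polynomial.coeff_monomial]
  rw [Finset.sum_ite_eq' (Finset.range N) m]
  simp [Finset.mem_range]

lemma G_inv {c : ℚ} (hc : c ≠ 0) (N : ℕ) :
    (X : ℚ[X]) ^ N ∣ (X + C c) * G c N - 1 := by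
  rw [Polynomial.X_pow_dvd_iff]
  intro m hm
  rw [Polynomial.coeff_sub, _root_.add_mul, Polynomial.coeff_add,
    Polynomial.coeff_C_mul]
  rcases m with _ | m
  · simp [G_coeff, hm, mul_comm c, inv_mul_cancel₀ hc, pow_succ]
  · rw [Polynomial.coeff_X_mul, Polynomial.coeff_one, G_coeff, G_coeff,
      if_pos (by omega : m < N), if_pos hm]
    have : c * ((-1:ℚ) ^ (m+1) * c⁻¹ ^ (m + 1 + 1)) = -((-1:ℚ)^m * c⁻¹ ^ (m+1)) := by
      rw [pow_succ (-1:ℚ), pow_succ c⁻¹ (m+1)]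
      field_simp
    rw [this]
    simp

lemma IP_G {d : ℚ} {e : ℤ} (he : e ≠ 0) (hed : e ∣ (Rat.num d)) (hd : d = (d.num : ℚ))
    (N : ℕ) : IP d 1 (G (e : ℚ) N) := by
  obtain ⟨w, hw⟩ := hed
  intro m
  rw [G_coeff]
  rcases lt_or_ge m N with h | h
  · rw [if_pos h]
    refine ⟨(-1) ^ m * w ^ (m+1), ?_⟩
    have he' : (e : ℚ) ≠ 0 := Int.cast_ne_zero.mpr he
    have : d = (e : ℚ) * (w : ℚ) := by rw [hd, hw]; push_cast; ring
    rw [this, show 1 + m = m + 1 by ring, mul_pow]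
    rw [eq_intCast]
    push_cast
    field_simp
    rw [mul_assoc, ← mul_pow, mul_one_div_cancel he', one_pow, mul_one]
  · rw [if_neg (by omega)]
    exact ⟨0, by simp⟩

/-- uniqueness of inverse mod X^N -/
lemma coeff_eq_of_inv {RR A B : ℚ[X]} {N : ℕ} (hR : RR.coeff 0 ≠ 0)
    (hA : (X : ℚ[X]) ^ N ∣ A * RR - 1) (hB : (X : ℚ[X]) ^ N ∣ B * RR - 1) :
    ∀ m < N, A.coeff m = B.coeff m := by
  have hD : (X : ℚ[X]) ^ N ∣ (A - B) * RR := by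
    have : (A - B) * RR = (A * RR - 1) - (B * RR - 1) := by ring
    rw [this]; exact dvd_sub hA hB
  rw [Polynomial.X_pow_dvd_iff] at hD
  intro m hm
  induction m using Nat.strong_induction_on with
  | _ m ih =>
    have h0 := hD m hm
    rw [Polynomial.coeff_mul, Finset.Nat.sum_antidiagonal_eq_sum_range_succ_mk,
      Finset.sum_range_succ] at h0
    have hz : ∀ i ∈ Finset.range m, (A - B).coeff i * RR.coeff (m - i) = 0 := by
      intro i hi
      have := ih i (Finset.mem_range.mp hi) (lt_trans (Finset.mem_range.mp hi) hm)
      rw [Polynomial.coeff_sub, this, sub_self, zero_mul]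
    rw [Finset.sum_eq_zero hz, zero_add, Nat.sub_self] at h0
    have := mul_eq_zero.mp h0
    rcases this with h | h
    · rw [Polynomial.coeff_sub, sub_eq_zero] at h; exact h
    · exact absurd h hR

lemma prod_congr_one {ι : Type*} (t : Finset ι) (f : ι → ℚ[X]) {N : ℕ}
    (h : ∀ l ∈ t, (X : ℚ[X]) ^ N ∣ f l - 1) :
    (X : ℚ[X]) ^ N ∣ (∏ l ∈ t, f l) - 1 := by
  induction t using Finset.cons_induction with
  | empty => simp
  | cons a t ha ih =>
      rw [Finset.prod_cons]
      have h1 := h a (Finset.mem_cons_self a t)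
      have h2 := ih fun l hl => h l (Finset.mem_cons_of_mem hl)
      have : f a * ∏ l ∈ t, f l - 1
          = (f a - 1) * (∏ l ∈ t, f l) + ((∏ l ∈ t, f l) - 1) := by ring
      rw [this]
      exact dvd_add (Dvd.dvd.mul_right h1 _) h2

theorem stmt9 (n r : ℕ) (hr : 1 ≤ r) (k : Fin r → ℕ) (hk : Function.Injective k)
    (hkn : ∀ j, k j ≤ n) (sIdx : Fin r → ℕ) (hs : ∀ j, 1 ≤ sIdx j)
    (s : ℕ) (hsum : s = ∑ j, sIdx j) (b : Fin r → ℕ → ℚ)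
    (hb : ∀ t : ℚ, (∀ j, t + (k j : ℚ) ≠ 0) →
      1 / ∏ j, (t + (k j : ℚ)) ^ sIdx j =
        ∑ j, ∑ i ∈ Finset.Icc 1 (sIdx j), b j i / (t + (k j : ℚ)) ^ i) :
    ∀ j, ∀ i ∈ Finset.Icc 1 (sIdx j),
      ∃ z : ℤ, (((Finset.Icc 1 n).lcm id : ℕ) : ℚ) ^ (s - i) * b j i = z := by
  have key : (1 : ℚ[X]) = ∑ j' : Fin r, ∑ i' ∈ Finset.Icc 1 (sIdx j'),
      C (b j' i') * (X + C ((k j' : ℚ))) ^ (sIdx j' - i') *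
        ∏ l ∈ Finset.univ.erase j', (X + C ((k l : ℚ))) ^ sIdx l := by
    apply Polynomial.eq_of_infinite_eval_eq
    have hsub : {t : ℚ | ∀ j', t + (k j' : ℚ) ≠ 0} ⊆
        {x | Polynomial.eval x (1 : ℚ[X]) = Polynomial.eval x (∑ j' : Fin r,
          ∑ i' ∈ Finset.Icc 1 (sIdx j'),
            C (b j' i') * (X + C ((k j' : ℚ))) ^ (sIdx j' - i') *
              ∏ l ∈ Finset.univ.erase j', (X + C ((k l : ℚ))) ^ sIdx l)} := by
      intro t ht
      simp only [Set.mem_setOf_eq] at ht ⊢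
      have hP : (∏ j', (t + (k j' : ℚ)) ^ sIdx j') ≠ 0 :=
        Finset.prod_ne_zero_iff.mpr fun j' _ => pow_ne_zero _ (ht j')
      rw [Polynomial.eval_one, Polynomial.eval_finset_sum]
      have hterm : ∀ j' : Fin r, Polynomial.eval t
          (∑ i' ∈ Finset.Icc 1 (sIdx j'),
            C (b j' i') * (X + C ((k j' : ℚ))) ^ (sIdx j' - i') *
              ∏ l ∈ Finset.univ.erase j', (X + C ((k l : ℚ))) ^ sIdx l)
          = ∑ i' ∈ Finset.Icc 1 (sIdx j'),
            (∏ l, (t + (k l : ℚ)) ^ sIdx l) * (b j' i' / (t + (k j' : ℚ)) ^ i') := by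
        intro j'
        rw [Polynomial.eval_finset_sum]
        refine Finset.sum_congr rfl fun i' hi' => ?_
        obtain ⟨h1, h2⟩ := Finset.mem_Icc.mp hi'
        simp only [Polynomial.eval_mul, Polynomial.eval_pow, Polynomial.eval_add,
          Polynomial.eval_X, Polynomial.eval_C, Polynomial.eval_prod]
        have hPsplit : (∏ l, (t + (k l : ℚ)) ^ sIdx l)
            = (t + (k j' : ℚ)) ^ i' * ((t + (k j' : ℚ)) ^ (sIdx j' - i') *
              ∏ l ∈ Finset.univ.erase j', (t + (k l : ℚ)) ^ sIdx l) := by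
          rw [← Finset.mul_prod_erase _ _ (Finset.mem_univ j'), ← mul_assoc,
            ← pow_add, Nat.add_sub_cancel' h2]
        rw [mul_div_assoc', eq_div_iff (pow_ne_zero i' (ht j')), hPsplit]
        ring
      rw [Finset.sum_congr rfl fun j' _ => hterm j']
      have hfac : ∑ j' : Fin r, ∑ i' ∈ Finset.Icc 1 (sIdx j'),
          (∏ l, (t + (k l : ℚ)) ^ sIdx l) * (b j' i' / (t + (k j' : ℚ)) ^ i')
          = (∏ l, (t + (k l : ℚ)) ^ sIdx l) * ∑ j' : Fin r,
            ∑ i' ∈ Finset.Icc 1 (sIdx j'), b j' i' / (t + (k j' : ℚ)) ^ i' := by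
        rw [Finset.mul_sum]
        exact Finset.sum_congr rfl fun _ _ => (Finset.mul_sum _ _ _).symm
      rw [hfac, ← hb t ht, mul_one_div, div_self hP]
    refine Set.Infinite.mono hsub ?_
    have hfin : ({t : ℚ | ∀ j', t + (k j' : ℚ) ≠ 0}ᶜ).Finite := by
      apply Set.Finite.subset (Set.finite_range (fun j' : Fin r => -(k j' : ℚ)))
      intro t ht
      simp only [Set.mem_compl_iff, Set.mem_setOf_eq] at ht
      push_neg at ht
      obtain ⟨j', hj'⟩ := ht
      exact ⟨j', show -((k j' : ℚ)) = t by linarith⟩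
    have := hfin.infinite_compl
    rwa [compl_compl] at this
  intro j i hi
  obtain ⟨hi1, hi2⟩ := Finset.mem_Icc.mp hi
  set N := sIdx j with hN
  -- step 2: shift X ↦ X - k j
  have key2 : (1 : ℚ[X]) = ∑ j' : Fin r, ∑ i' ∈ Finset.Icc 1 (sIdx j'),
      C (b j' i') * (X + C ((k j' : ℚ) - (k j : ℚ))) ^ (sIdx j' - i') *
        ∏ l ∈ Finset.univ.erase j', (X + C ((k l : ℚ) - (k j : ℚ))) ^ sIdx l := by
    have hmap := congrArg (Polynomial.aeval ((X : ℚ[X]) - C ((k j : ℚ)))) key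
    have hXC : ∀ a : ℚ, Polynomial.aeval ((X : ℚ[X]) - C ((k j : ℚ)))
        ((X : ℚ[X]) + C a) = X + C (a - (k j : ℚ)) := by
      intro a
      rw [map_add, Polynomial.aeval_X, Polynomial.aeval_C, Polynomial.algebraMap_eq,
        C_sub]
      ring
    rw [map_one, map_sum] at hmap
    convert hmap using 2 with j' _
    rw [map_sum]
    refine Finset.sum_congr rfl fun i' _ => ?_
    rw [map_mul, map_mul, map_pow, map_prod, Polynomial.aeval_C,
      Polynomial.algebraMap_eq, hXC]
    congr 1
    exact Finset.prod_congr rfl fun l _ => by rw [map_pow, hXC]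
  clear key
  set A : ℚ[X] := ∑ i' ∈ Finset.Icc 1 N, C (b j i') * X ^ (N - i') with hA
  set R : ℚ[X] := ∏ l ∈ Finset.univ.erase j,
      (X + C ((k l : ℚ) - (k j : ℚ))) ^ sIdx l with hR
  have hAR : (X : ℚ[X]) ^ N ∣ A * R - 1 := by
    have hsplit := (Finset.add_sum_erase Finset.univ
      (fun j' => ∑ i' ∈ Finset.Icc 1 (sIdx j'),
        C (b j' i') * (X + C ((k j' : ℚ) - (k j : ℚ))) ^ (sIdx j' - i') *
          ∏ l ∈ Finset.univ.erase j', (X + C ((k l : ℚ) - (k j : ℚ))) ^ sIdx l)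
      (Finset.mem_univ j)).symm
    rw [hsplit] at key2
    have hj : ∑ i' ∈ Finset.Icc 1 (sIdx j),
        C (b j i') * (X + C ((k j : ℚ) - (k j : ℚ))) ^ (sIdx j - i') *
          ∏ l ∈ Finset.univ.erase j, (X + C ((k l : ℚ) - (k j : ℚ))) ^ sIdx l
        = A * R := by
      rw [hA, Finset.sum_mul]
      refine Finset.sum_congr rfl fun i' _ => ?_
      rw [sub_self, map_zero, add_zero]
    rw [hj] at key2
    have hrest : (X : ℚ[X]) ^ N ∣ ∑ j' ∈ Finset.univ.erase j,
        ∑ i' ∈ Finset.Icc 1 (sIdx j'),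
          C (b j' i') * (X + C ((k j' : ℚ) - (k j : ℚ))) ^ (sIdx j' - i') *
            ∏ l ∈ Finset.univ.erase j', (X + C ((k l : ℚ) - (k j : ℚ))) ^ sIdx l := by
      refine Finset.dvd_sum fun j' hj' => Finset.dvd_sum fun i' _ => ?_
      have hjj' : j ∈ Finset.univ.erase j' := by
        rcases Finset.mem_erase.mp hj' with ⟨hne, _⟩
        exact Finset.mem_erase.mpr ⟨hne.symm, Finset.mem_univ j⟩
      have : (X : ℚ[X]) ^ N ∣ ∏ l ∈ Finset.univ.erase j',
          (X + C ((k l : ℚ) - (k j : ℚ))) ^ sIdx l := by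
        have hd := Finset.dvd_prod_of_mem
          (fun l => ((X : ℚ[X]) + C ((k l : ℚ) - (k j : ℚ))) ^ sIdx l) hjj'
        simp only [sub_self, map_zero, add_zero] at hd
        exact hd
      exact this.mul_left _
    have : A * R - 1 = -(∑ j' ∈ Finset.univ.erase j,
        ∑ i' ∈ Finset.Icc 1 (sIdx j'),
          C (b j' i') * (X + C ((k j' : ℚ) - (k j : ℚ))) ^ (sIdx j' - i') *
            ∏ l ∈ Finset.univ.erase j', (X + C ((k l : ℚ) - (k j : ℚ))) ^ sIdx l) := by
      rw [eq_neg_iff_add_eq_zero, sub_add_eq_add_sub, ← key2, sub_self]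
    rw [this]
    exact hrest.neg_right
  -- step 4: explicit inverse B of R mod X^N
  set d : ℚ := (((Finset.Icc 1 n).lcm id : ℕ) : ℚ) with hd
  have hcne : ∀ l ∈ Finset.univ.erase j, ((k l : ℚ) - (k j : ℚ)) ≠ 0 := by
    intro l hl
    rcases Finset.mem_erase.mp hl with ⟨hne, _⟩
    exact sub_ne_zero.mpr (fun h => hne (hk (Nat.cast_injective h)))
  set B : ℚ[X] := ∏ l ∈ Finset.univ.erase j,
      (G ((k l : ℚ) - (k j : ℚ)) N) ^ sIdx l with hB
  have hBR : (X : ℚ[X]) ^ N ∣ B * R - 1 := by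
    have : B * R = ∏ l ∈ Finset.univ.erase j,
        ((X + C ((k l : ℚ) - (k j : ℚ))) * G ((k l : ℚ) - (k j : ℚ)) N) ^ sIdx l := by
      rw [hB, hR, mul_comm, ← Finset.prod_mul_distrib]
      exact Finset.prod_congr rfl fun l _ => by rw [← mul_pow]
    rw [this]
    refine prod_congr_one _ _ fun l hl => ?_
    have h1 : (X : ℚ[X]) ^ N ∣
        (X + C ((k l : ℚ) - (k j : ℚ))) * G ((k l : ℚ) - (k j : ℚ)) N - 1 :=
      G_inv (hcne l hl) N
    have h2 := sub_dvd_pow_sub_pow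
      ((X + C ((k l : ℚ) - (k j : ℚ))) * G ((k l : ℚ) - (k j : ℚ)) N) 1 (sIdx l)
    rw [one_pow] at h2
    exact dvd_trans h1 h2
  have hR0 : R.coeff 0 ≠ 0 := by
    rw [Polynomial.coeff_zero_eq_eval_zero, hR, Polynomial.eval_prod]
    refine Finset.prod_ne_zero_iff.mpr fun l hl => ?_
    rw [Polynomial.eval_pow, Polynomial.eval_add, Polynomial.eval_X,
      Polynomial.eval_C, zero_add]
    exact pow_ne_zero _ (hcne l hl)
  -- step 5: A and B agree below N
  have hNi : N - i < N := by omega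
  have huniq := coeff_eq_of_inv hR0 hAR hBR (N - i) hNi
  have hAco : A.coeff (N - i) = b j i := by
    rw [hA, Polynomial.finset_sum_coeff]
    simp only [Polynomial.coeff_C_mul, Polynomial.coeff_X_pow]
    rw [Finset.sum_eq_single i]
    · rw [if_pos rfl, mul_one]
    · intro i' hi' hne
      obtain ⟨ha, hb2⟩ := Finset.mem_Icc.mp hi'
      rw [if_neg (by omega), mul_zero]
    · intro habs; exact absurd hi habs
  -- step 6: integrality of B coefficients
  have hIPB : IP d (∑ l ∈ Finset.univ.erase j, sIdx l) B := by
    refine IP_prod _ _ _ fun l hl => ?_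
    have he : ((k l : ℤ) - (k j : ℤ)) ≠ 0 := by
      intro h
      exact hcne l hl (by push_cast; exact_mod_cast congrArg (fun z : ℤ => (z : ℚ)) h)
    have hG1 : IP d 1 (G ((k l : ℚ) - (k j : ℚ)) N) := by
      have hcast : (((k l : ℤ) - (k j : ℤ) : ℤ) : ℚ) = (k l : ℚ) - (k j : ℚ) := by
        push_cast; ring
      rw [← hcast]
      refine IP_G he ?_ ?_ N
      · rw [hd, Rat.num_natCast]
        have hmem : ((k l : ℤ) - (k j : ℤ)).natAbs ∈ Finset.Icc 1 n := by
          refine Finset.mem_Icc.mpr ⟨?_, ?_⟩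
          · omega
          · have h1 := hkn l
            have h2 := hkn j
            omega
        have := Finset.dvd_lcm (f := id) hmem
        simp only [id_eq] at this
        exact Int.natAbs_dvd.mp (Int.natCast_dvd_natCast.mpr this)
      · rw [hd, Rat.num_natCast]
        simp
    have := IP_pow hG1 (sIdx l)
    simpa using this
  have hfin := hIPB (N - i)
  rw [← huniq, hAco] at hfin
  have hexp : (∑ l ∈ Finset.univ.erase j, sIdx l) + (N - i) = s - i := by
    have hsplit2 := Finset.add_sum_erase Finset.univ sIdx (Finset.mem_univ j)
    rw [hN] at *
    omega
  rw [hexp] at hfin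
  obtain ⟨z, hz⟩ := hfin
  exact ⟨z, by rw [← hz]; simp⟩
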